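/- Let E = ([p]×[q]) \ {(i,j)}. A partial real matrix M_E has infinitely many completions of rank at most r if and only if the submatrix M_{î,:} (row i deleted) or M_{:,ĵ} (column j deleted) has rank at most r−1; moreover, in that case every real value of the missing entry yields a completion of rank at most r. -/

import Mathlib

open Matrix Submodule Set Module
set_option linter.unusedSectionVars false

section aux
variable {m n : Type*} [Fintype m] [Fintype n] [DecidableEq n]

private lemma aux_range_union (M : Matrix m n ℝ) (j : n) :
    Set.range Mᵀ =
      Set.range (M.submatrix id (fun l : {l : n // l ≠ j} => (l : n)))ᵀ ∪ {Mᵀ j} := by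
  ext v
  constructor
  · rintro ⟨l, rfl⟩
    rcases eq_or_ne l j with rfl | h
    · exact Or.inr rfl
    · exact Or.inl ⟨⟨l, h⟩, rfl⟩
  · rintro (⟨l, rfl⟩ | h)
    · exact ⟨l, rfl⟩
    · exact ⟨j, (Set.mem_singleton_iff.mp h).symm⟩

private lemma aux_span_eq (M : Matrix m n ℝ) (j : n) :
    span ℝ (Set.range Mᵀ) =
      span ℝ (Set.range (M.submatrix id (fun l : {l : n // l ≠ j} => (l : n)))ᵀ) ⊔
        span ℝ {Mᵀ j} := by
  rw [aux_range_union M j, Submodule.span_union]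

private lemma aux_rank_sub_le (M : Matrix m n ℝ) (j : n) :
    (M.submatrix id (fun l : {l : n // l ≠ j} => (l : n))).rank ≤ M.rank := by
  rw [Matrix.rank_eq_finrank_span_cols, Matrix.rank_eq_finrank_span_cols]
  unfold Matrix.col
  apply Submodule.finrank_mono
  rw [aux_span_eq M j]
  exact le_sup_left

private lemma aux_rank_le (M : Matrix m n ℝ) (j : n) :
    M.rank ≤ (M.submatrix id (fun l : {l : n // l ≠ j} => (l : n))).rank + 1 := by
  rw [Matrix.rank_eq_finrank_span_cols, Matrix.rank_eq_finrank_span_cols]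
  unfold Matrix.col
  rw [aux_span_eq M j]
  refine (Submodule.finrank_add_le_finrank_add_finrank _ _).trans ?_
  have h1 : finrank ℝ (span ℝ ({Mᵀ j} : Set (m → ℝ))) ≤ 1 := by
    rcases eq_or_ne (Mᵀ j) 0 with h | h
    · rw [h, show (span ℝ ({0} : Set (m → ℝ))) = ⊥ from by simp]
      simp
    · rw [finrank_span_singleton h]
  omega

private lemma aux_mem (M : Matrix m n ℝ) (j : n)
    (h : M.rank ≤ (M.submatrix id (fun l : {l : n // l ≠ j} => (l : n))).rank) :
    Mᵀ j ∈ span ℝ (Set.range (M.submatrix id (fun l : {l : n // l ≠ j} => (l : n)))ᵀ) := by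
  have hle : span ℝ (Set.range (M.submatrix id (fun l : {l : n // l ≠ j} => (l : n)))ᵀ) ≤
      span ℝ (Set.range Mᵀ) := by
    rw [aux_span_eq M j]
    exact le_sup_left
  have heq := Submodule.eq_of_le_of_finrank_le hle
    (by rw [Matrix.rank_eq_finrank_span_cols, Matrix.rank_eq_finrank_span_cols] at h; unfold Matrix.col at h; exact h)
  rw [heq]
  exact Submodule.subset_span ⟨j, rfl⟩

end aux

theorem stmt12 {p q r : ℕ} (f : Fin p → Fin q → ℝ) (i : Fin p) (j : Fin q) :
    ({M : Matrix (Fin p) (Fin q) ℝ | M.rank ≤ r ∧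
        ∀ k l, (k, l) ≠ (i, j) → M k l = f k l}.Infinite ↔
      (((Matrix.of f).submatrix (fun k : {k : Fin p // k ≠ i} => (k : Fin p)) id).rank < r ∨
       ((Matrix.of f).submatrix id (fun l : {l : Fin q // l ≠ j} => (l : Fin q))).rank < r)) ∧
    ((((Matrix.of f).submatrix (fun k : {k : Fin p // k ≠ i} => (k : Fin p)) id).rank < r ∨
      ((Matrix.of f).submatrix id (fun l : {l : Fin q // l ≠ j} => (l : Fin q))).rank < r) →
      ∀ x : ℝ, (Matrix.of fun k l => if (k, l) = (i, j) then x else f k l).rank ≤ r) := by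
  classical
  set N : ℝ → Matrix (Fin p) (Fin q) ℝ :=
    fun x => Matrix.of fun k l => if (k, l) = (i, j) then x else f k l with hN
  set A := (Matrix.of f).submatrix (fun k : {k : Fin p // k ≠ i} => (k : Fin p)) id with hA
  set B := (Matrix.of f).submatrix id (fun l : {l : Fin q // l ≠ j} => (l : Fin q)) with hB
  have hBx : ∀ x, (N x).submatrix id (fun l : {l : Fin q // l ≠ j} => (l : Fin q)) = B := by
    intro x
    ext k l
    simp [hN, hB, Prod.ext_iff, l.2]
  have hAxT : ∀ x, (N x)ᵀ.submatrix id (fun k : {k : Fin p // k ≠ i} => (k : Fin p)) = Aᵀ := by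
    intro x
    ext l k
    simp [hN, hA, Prod.ext_iff, k.2]
  have hrankA_le : ∀ x, A.rank ≤ (N x).rank := by
    intro x
    have h := aux_rank_sub_le (N x)ᵀ i
    rwa [hAxT, Matrix.rank_transpose, Matrix.rank_transpose] at h
  have hrank_le_A : ∀ x, (N x).rank ≤ A.rank + 1 := by
    intro x
    have h := aux_rank_le (N x)ᵀ i
    rwa [hAxT, Matrix.rank_transpose, Matrix.rank_transpose] at h
  have hrankB_le : ∀ x, B.rank ≤ (N x).rank := by
    intro x
    have h := aux_rank_sub_le (N x) j
    rwa [hBx] at h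
  have hrank_le_B : ∀ x, (N x).rank ≤ B.rank + 1 := by
    intro x
    have h := aux_rank_le (N x) j
    rwa [hBx] at h
  have hupper : (A.rank < r ∨ B.rank < r) → ∀ x, (N x).rank ≤ r := by
    rintro (h | h) x
    · exact (hrank_le_A x).trans (by omega)
    · exact (hrank_le_B x).trans (by omega)
  have hrowmem : ∀ x, (N x).rank ≤ A.rank → (N x) i ∈ Submodule.span ℝ (Set.range A) := by
    intro x hx
    have h' : (N x)ᵀ.rank ≤
        ((N x)ᵀ.submatrix id (fun k : {k : Fin p // k ≠ i} => (k : Fin p))).rank := by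
      rw [hAxT, Matrix.rank_transpose, Matrix.rank_transpose]
      exact hx
    have h := aux_mem (N x)ᵀ i h'
    rw [hAxT] at h
    rwa [Matrix.transpose_transpose] at h
  have hcolmem : ∀ x, (N x).rank ≤ B.rank → (N x)ᵀ j ∈ Submodule.span ℝ (Set.range Bᵀ) := by
    intro x hx
    have h' : (N x).rank ≤
        ((N x).submatrix id (fun l : {l : Fin q // l ≠ j} => (l : Fin q))).rank := by
      rw [hBx]
      exact hx
    have h := aux_mem (N x) j h'
    rwa [hBx] at h
  have hkey : r ≤ A.rank → r ≤ B.rank → {x : ℝ | (N x).rank ≤ r}.Subsingleton := by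
    intro hAr hBr x hx y hy
    by_contra hxy
    have hrx := hrowmem x (le_trans hx hAr)
    have hry := hrowmem y (le_trans hy hAr)
    have hcx := hcolmem x (le_trans hx hBr)
    have hej : (Pi.single j 1 : Fin q → ℝ) ∈ Submodule.span ℝ (Set.range A) := by
      have hsub2 := Submodule.smul_mem _ (x - y)⁻¹ (Submodule.sub_mem _ hrx hry)
      convert hsub2 using 1
      funext l
      by_cases hl : l = j
      · subst hl
        simp [hN, Pi.single_apply, sub_ne_zero.mpr hxy]
      · simp [hN, Pi.single_apply, hl, Prod.ext_iff]
    obtain ⟨c, hc⟩ := mem_span_range_iff_exists_fun ℝ |>.mp hej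
    obtain ⟨d, hd⟩ := mem_span_range_iff_exists_fun ℝ |>.mp hcx
    have h1 : ∀ l : Fin q,
        (∑ k : {k : Fin p // k ≠ i}, c k * f k.val l) = if l = j then 1 else 0 := by
      intro l
      have h := congrFun hc l
      simpa [Finset.sum_apply, Pi.single_apply, hA] using h
    have h2 : ∀ k : {k : Fin p // k ≠ i},
        (∑ l : {l : Fin q // l ≠ j}, d l * f k.val l.val) = f k.val j := by
      intro k
      have h := congrFun hd k.val
      simpa [Finset.sum_apply, hB, hN, Prod.ext_iff, k.2] using h
    have hcontra : (1 : ℝ) = 0 := by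
      calc (1 : ℝ) = ∑ k : {k : Fin p // k ≠ i}, c k * f k.val j := by
            simpa using (h1 j).symm
        _ = ∑ k : {k : Fin p // k ≠ i}, c k * ∑ l : {l : Fin q // l ≠ j}, d l * f k.val l.val := by
            refine Finset.sum_congr rfl fun k _ => ?_
            rw [h2 k]
        _ = ∑ k : {k : Fin p // k ≠ i}, ∑ l : {l : Fin q // l ≠ j},
              d l * (c k * f k.val l.val) := by
            refine Finset.sum_congr rfl fun k _ => ?_
            rw [Finset.mul_sum]
            exact Finset.sum_congr rfl fun l _ => by ring
        _ = ∑ l : {l : Fin q // l ≠ j}, ∑ k : {k : Fin p // k ≠ i},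
              d l * (c k * f k.val l.val) := Finset.sum_comm
        _ = ∑ l : {l : Fin q // l ≠ j}, d l * ∑ k : {k : Fin p // k ≠ i}, c k * f k.val l.val := by
            refine Finset.sum_congr rfl fun l _ => ?_
            rw [Finset.mul_sum]
        _ = ∑ l : {l : Fin q // l ≠ j}, d l * 0 := by
            refine Finset.sum_congr rfl fun l _ => ?_
            rw [h1 l.val, if_neg l.2]
        _ = 0 := by simp
    exact one_ne_zero hcontra
  have hSsub : {M : Matrix (Fin p) (Fin q) ℝ | M.rank ≤ r ∧
        ∀ k l, (k, l) ≠ (i, j) → M k l = f k l} ⊆ N '' {x : ℝ | (N x).rank ≤ r} := by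
    intro M hM
    have hMeq : N (M i j) = M := by
      ext k l
      by_cases h : (k, l) = (i, j)
      · obtain ⟨hk, hl⟩ := Prod.mk.injEq .. ▸ h
        subst hk; subst hl
        simp [hN]
      · simp only [hN, Matrix.of_apply, if_neg h]
        exact (hM.2 k l h).symm
    exact ⟨M i j, by rw [Set.mem_setOf_eq, hMeq]; exact hM.1, hMeq⟩
  constructor
  · constructor
    · intro hinf
      by_contra hcon
      push_neg at hcon
      obtain ⟨h1', h2'⟩ := hcon
      have hfin : ({x : ℝ | (N x).rank ≤ r}).Finite := (hkey h1' h2').finite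
      exact hinf ((hfin.image N).subset hSsub)
    · intro hor
      refine Set.infinite_of_injective_forall_mem (f := N) ?_ ?_
      · intro x y hxy
        have h := congrFun (congrFun hxy i) j
        simpa [hN] using h
      · intro x
        refine ⟨hupper hor x, fun k l hkl => ?_⟩
        simp only [hN, Matrix.of_apply, if_neg hkl]
  · intro hor x
    exact hupper hor x
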